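/- Let C̄ = K̃ ⊕ g(X̄) where K̃ is a random variable on a finite abelian group G of size N, X̄ is a random variable independent of (K̃, M) with g an arbitrary function into G, and M another random variable. Then I(C̄; X̄ | M) ≤ log N − H(K̃ | M). -/

import Mathlib

open scoped BigOperators Classical
open Real

noncomputable section

/-- A probability mass function on a finite type. -/
def IsPmf {Ω : Type*} [Fintype Ω] (μ : Ω → ℝ) : Prop :=
  (∀ ω, 0 ≤ μ ω) ∧ ∑ ω, μ ω = 1

/-- Probability of an event. -/
def pr {Ω : Type*} [Fintype Ω] (μ : Ω → ℝ) (E : Ω → Prop) : ℝ :=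
  ∑ ω, if E ω then μ ω else 0

/-- Distribution of a random variable. -/
def dist {Ω A : Type*} [Fintype Ω] (μ : Ω → ℝ) (X : Ω → A) (a : A) : ℝ :=
  pr μ (fun ω => X ω = a)

/-- Shannon entropy (natural log) of a random variable. -/
def ent {Ω A : Type*} [Fintype Ω] [Fintype A] (μ : Ω → ℝ) (X : Ω → A) : ℝ :=
  -∑ a, dist μ X a * Real.log (dist μ X a)

/-- Conditional entropy H(X|Y). -/
def condEnt {Ω A B : Type*} [Fintype Ω] [Fintype A] [Fintype B]
    (μ : Ω → ℝ) (X : Ω → A) (Y : Ω → B) : ℝ :=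
  ent μ (fun ω => (X ω, Y ω)) - ent μ Y

/-- Mutual information I(X;Y). -/
def mutInfo {Ω A B : Type*} [Fintype Ω] [Fintype A] [Fintype B]
    (μ : Ω → ℝ) (X : Ω → A) (Y : Ω → B) : ℝ :=
  ent μ X + ent μ Y - ent μ (fun ω => (X ω, Y ω))

/-- Conditional mutual information I(X;Y|Z). -/
def condMutInfo {Ω A B C : Type*} [Fintype Ω] [Fintype A] [Fintype B] [Fintype C]
    (μ : Ω → ℝ) (X : Ω → A) (Y : Ω → B) (Z : Ω → C) : ℝ :=
  ent μ (fun ω => (X ω, Z ω)) + ent μ (fun ω => (Y ω, Z ω))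
    - ent μ (fun ω => (X ω, Y ω, Z ω)) - ent μ Z

/-- Independence of two random variables. -/
def Indep {Ω A B : Type*} [Fintype Ω] (μ : Ω → ℝ) (X : Ω → A) (Y : Ω → B) : Prop :=
  ∀ a b, dist μ (fun ω => (X ω, Y ω)) (a, b) = dist μ X a * dist μ Y b

/-- Markov chain U → Z → K. -/
def Markov {Ω A B C : Type*} [Fintype Ω] (μ : Ω → ℝ)
    (U : Ω → A) (Z : Ω → B) (K : Ω → C) : Prop :=
  ∀ u z k, dist μ (fun ω => (U ω, Z ω, K ω)) (u, z, k) * dist μ Z z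
    = dist μ (fun ω => (U ω, Z ω)) (u, z) * dist μ (fun ω => (Z ω, K ω)) (z, k)

section Aux

variable {Ω A B : Type*} [Fintype Ω] [Fintype A] [Fintype B] (μ : Ω → ℝ)

lemma dist_nonneg' (hμ : IsPmf μ) (X : Ω → A) (a : A) : 0 ≤ _root_.dist μ X a := by
  unfold _root_.dist pr
  apply Finset.sum_nonneg
  intro ω _
  split <;> simp [hμ.1 ω]

lemma sum_dist (hμ : IsPmf μ) (X : Ω → A) : ∑ a, _root_.dist μ X a = 1 := by
  unfold _root_.dist pr
  rw [Finset.sum_comm]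
  calc ∑ ω, ∑ a, (if X ω = a then μ ω else 0) = ∑ ω, μ ω := by
        refine Finset.sum_congr rfl fun ω _ => ?_
        simp
    _ = 1 := hμ.2

lemma marg_fst (X : Ω → A) (Y : Ω → B) (a : A) :
    ∑ b, _root_.dist μ (fun ω => (X ω, Y ω)) (a, b) = _root_.dist μ X a := by
  unfold _root_.dist pr
  rw [Finset.sum_comm]
  refine Finset.sum_congr rfl fun ω _ => ?_
  by_cases h : X ω = a <;> simp [Prod.ext_iff, h]

lemma marg_snd (X : Ω → A) (Y : Ω → B) (b : B) :
    ∑ a, _root_.dist μ (fun ω => (X ω, Y ω)) (a, b) = _root_.dist μ Y b := by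
  unfold _root_.dist pr
  rw [Finset.sum_comm]
  refine Finset.sum_congr rfl fun ω _ => ?_
  by_cases h : Y ω = b <;> simp [Prod.ext_iff, h]

lemma ent_equiv (X : Ω → A) (e : A ≃ B) :
    ent μ (fun ω => e (X ω)) = ent μ X := by
  have hd : ∀ b, _root_.dist μ (fun ω => e (X ω)) b = _root_.dist μ X (e.symm b) := by
    intro b
    unfold _root_.dist pr
    refine Finset.sum_congr rfl fun ω _ => ?_
    congr 1
    simp [Equiv.apply_eq_iff_eq_symm_apply]
  unfold ent
  congr 1
  simp_rw [hd]
  exact Equiv.sum_comp e.symm (fun a => _root_.dist μ X a * Real.log (_root_.dist μ X a))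

lemma gibbs {p q : A → ℝ} (hp0 : ∀ a, 0 ≤ p a) (hp1 : ∑ a, p a = 1)
    (hq0 : ∀ a, 0 ≤ q a) (hq1 : ∑ a, q a ≤ 1)
    (hpq : ∀ a, 0 < p a → 0 < q a) :
    -∑ a, p a * Real.log (p a) ≤ -∑ a, p a * Real.log (q a) := by
  have key : ∑ a, p a * (Real.log (q a) - Real.log (p a)) ≤ 0 := by
    have h1 : ∀ a, p a * (Real.log (q a) - Real.log (p a)) ≤ q a - p a := by
      intro a
      rcases eq_or_lt_of_le (hp0 a) with h | h
      · simp [← h]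
        exact hq0 a
      · have hq := hpq a h
        have hlog : Real.log (q a) - Real.log (p a) = Real.log (q a / p a) :=
          (Real.log_div hq.ne' h.ne').symm
        rw [hlog]
        calc p a * Real.log (q a / p a) ≤ p a * (q a / p a - 1) := by
              apply mul_le_mul_of_nonneg_left _ h.le
              exact Real.log_le_sub_one_of_pos (div_pos hq h)
          _ = q a - p a := by field_simp
    calc ∑ a, p a * (Real.log (q a) - Real.log (p a)) ≤ ∑ a, (q a - p a) :=
          Finset.sum_le_sum fun a _ => h1 a
      _ = (∑ a, q a) - ∑ a, p a := Finset.sum_sub_distrib q p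
      _ ≤ 0 := by rw [hp1]; linarith
  have hsplit : ∑ a, p a * (Real.log (q a) - Real.log (p a))
      = (∑ a, p a * Real.log (q a)) - ∑ a, p a * Real.log (p a) := by
    rw [← Finset.sum_sub_distrib]
    exact Finset.sum_congr rfl fun a _ => by ring
  rw [hsplit] at key
  linarith

lemma ent_le_log (hμ : IsPmf μ) (X : Ω → A) :
    ent μ X ≤ Real.log (Fintype.card A) := by
  have hΩ : Nonempty Ω := by
    by_contra h
    have h0 : (∑ ω : Ω, μ ω) = 0 := Finset.sum_eq_zero fun ω _ => absurd ⟨ω⟩ h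
    exact one_ne_zero (hμ.2 ▸ h0)
  have hA : Nonempty A := ⟨X (Classical.choice hΩ)⟩
  have hcard : (0 : ℝ) < Fintype.card A := by
    exact_mod_cast Fintype.card_pos
  have hq1 : ∑ _a : A, (Fintype.card A : ℝ)⁻¹ ≤ 1 := by
    rw [Finset.sum_const, Finset.card_univ, nsmul_eq_mul, mul_inv_cancel₀ hcard.ne']
  have key := gibbs (p := _root_.dist μ X) (q := fun _ => (Fintype.card A : ℝ)⁻¹)
    (dist_nonneg' μ hμ X) (sum_dist μ hμ X)
    (fun _ => by positivity) hq1 (fun a _ => by positivity)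
  calc ent μ X ≤ -∑ a, _root_.dist μ X a * Real.log ((Fintype.card A : ℝ)⁻¹) := key
    _ = Real.log (Fintype.card A) := by
        rw [Real.log_inv, ← Finset.sum_mul, sum_dist μ hμ X]
        ring

lemma ent_pair_le (hμ : IsPmf μ) (X : Ω → A) (Y : Ω → B) :
    ent μ (fun ω => (X ω, Y ω)) ≤ ent μ X + ent μ Y := by
  have hple_fst : ∀ a b, _root_.dist μ (fun ω => (X ω, Y ω)) (a, b) ≤ _root_.dist μ X a := by
    intro a b
    rw [← marg_fst μ X Y a]
    exact Finset.single_le_sum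
      (f := fun b' => _root_.dist μ (fun ω => (X ω, Y ω)) (a, b'))
      (fun b' _ => dist_nonneg' μ hμ _ _) (Finset.mem_univ b)
  have hple_snd : ∀ a b, _root_.dist μ (fun ω => (X ω, Y ω)) (a, b) ≤ _root_.dist μ Y b := by
    intro a b
    rw [← marg_snd μ X Y b]
    exact Finset.single_le_sum
      (f := fun a' => _root_.dist μ (fun ω => (X ω, Y ω)) (a', b))
      (fun a' _ => dist_nonneg' μ hμ _ _) (Finset.mem_univ a)
  have key := gibbs (p := _root_.dist μ (fun ω => (X ω, Y ω)))
    (q := fun ab => _root_.dist μ X ab.1 * _root_.dist μ Y ab.2)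
    (fun ab => dist_nonneg' μ hμ _ _) (sum_dist μ hμ _)
    (fun ab => mul_nonneg (dist_nonneg' μ hμ _ _) (dist_nonneg' μ hμ _ _))
    (by
      rw [Fintype.sum_prod_type]
      have h : ∀ a : A, ∑ b : B, _root_.dist μ X a * _root_.dist μ Y b = _root_.dist μ X a := by
        intro a
        rw [← Finset.mul_sum, sum_dist μ hμ Y, mul_one]
      simp_rw [h]
      rw [sum_dist μ hμ X])
    (fun ab hab => mul_pos (lt_of_lt_of_le hab (hple_fst ab.1 ab.2))
      (lt_of_lt_of_le hab (hple_snd ab.1 ab.2)))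
  have hterm : ∀ ab : A × B,
      _root_.dist μ (fun ω => (X ω, Y ω)) ab * Real.log (_root_.dist μ X ab.1 * _root_.dist μ Y ab.2)
      = _root_.dist μ (fun ω => (X ω, Y ω)) ab * Real.log (_root_.dist μ X ab.1)
        + _root_.dist μ (fun ω => (X ω, Y ω)) ab * Real.log (_root_.dist μ Y ab.2) := by
    intro ab
    rcases eq_or_lt_of_le (dist_nonneg' μ hμ (fun ω => (X ω, Y ω)) ab) with h | h
    · rw [← h]; ring
    · have h1 : 0 < _root_.dist μ X ab.1 := lt_of_lt_of_le h (hple_fst ab.1 ab.2)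
      have h2 : 0 < _root_.dist μ Y ab.2 := lt_of_lt_of_le h (hple_snd ab.1 ab.2)
      rw [Real.log_mul h1.ne' h2.ne']; ring
  have hsplit : -∑ ab : A × B, _root_.dist μ (fun ω => (X ω, Y ω)) ab
        * Real.log (_root_.dist μ X ab.1 * _root_.dist μ Y ab.2)
      = ent μ X + ent μ Y := by
    simp_rw [hterm]
    rw [Finset.sum_add_distrib, neg_add]
    congr 1
    · unfold ent
      congr 1
      rw [Fintype.sum_prod_type]
      refine Finset.sum_congr rfl fun a _ => ?_
      show (∑ b : B, _root_.dist μ (fun ω => (X ω, Y ω)) (a, b) * Real.log (_root_.dist μ X a))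
        = _root_.dist μ X a * Real.log (_root_.dist μ X a)
      rw [← Finset.sum_mul, marg_fst μ X Y a]
    · unfold ent
      congr 1
      rw [Fintype.sum_prod_type_right]
      refine Finset.sum_congr rfl fun b _ => ?_
      show (∑ a : A, _root_.dist μ (fun ω => (X ω, Y ω)) (a, b) * Real.log (_root_.dist μ Y b))
        = _root_.dist μ Y b * Real.log (_root_.dist μ Y b)
      rw [← Finset.sum_mul, marg_snd μ X Y b]
  calc ent μ (fun ω => (X ω, Y ω))
      ≤ -∑ ab : A × B, _root_.dist μ (fun ω => (X ω, Y ω)) ab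
          * Real.log (_root_.dist μ X ab.1 * _root_.dist μ Y ab.2) := key
    _ = ent μ X + ent μ Y := hsplit

lemma ent_indep (hμ : IsPmf μ) (X : Ω → A) (Y : Ω → B) (h : Indep μ X Y) :
    ent μ (fun ω => (X ω, Y ω)) = ent μ X + ent μ Y := by
  have hd : ∀ ab : A × B, _root_.dist μ (fun ω => (X ω, Y ω)) ab
      = _root_.dist μ X ab.1 * _root_.dist μ Y ab.2 := fun ab => h ab.1 ab.2
  have hterm : ∀ ab : A × B,
      _root_.dist μ X ab.1 * _root_.dist μ Y ab.2
        * Real.log (_root_.dist μ X ab.1 * _root_.dist μ Y ab.2)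
      = _root_.dist μ Y ab.2 * (_root_.dist μ X ab.1 * Real.log (_root_.dist μ X ab.1))
        + _root_.dist μ X ab.1 * (_root_.dist μ Y ab.2 * Real.log (_root_.dist μ Y ab.2)) := by
    intro ab
    rcases eq_or_lt_of_le (dist_nonneg' μ hμ X ab.1) with h1 | h1
    · rw [← h1]; ring
    rcases eq_or_lt_of_le (dist_nonneg' μ hμ Y ab.2) with h2 | h2
    · rw [← h2]; ring
    rw [Real.log_mul h1.ne' h2.ne']; ring
  unfold ent
  simp_rw [hd, hterm]
  rw [Fintype.sum_prod_type]
  have h2 : ∀ a : A, ∑ b : B,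
      (_root_.dist μ Y b * (_root_.dist μ X a * Real.log (_root_.dist μ X a))
        + _root_.dist μ X a * (_root_.dist μ Y b * Real.log (_root_.dist μ Y b)))
      = _root_.dist μ X a * Real.log (_root_.dist μ X a)
        + _root_.dist μ X a * ∑ b : B, _root_.dist μ Y b * Real.log (_root_.dist μ Y b) := by
    intro a
    rw [Finset.sum_add_distrib, ← Finset.sum_mul, sum_dist μ hμ Y, one_mul, ← Finset.mul_sum]
  simp_rw [h2]
  rw [Finset.sum_add_distrib, ← Finset.sum_mul, sum_dist μ hμ X, one_mul]
  ring

end Aux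

/-- Lemma 2: If `C̄ = K̃ ⊕ g(X̄)` in a finite abelian group `G` of size
`N`, with `X̄` independent of `(K̃, M)`, then `I(C̄; X̄ | M) ≤ log N − H(K̃ | M)`. -/
theorem stmt12 {Ω G ℳ 𝒳 : Type*} [Fintype Ω] [Fintype G] [AddCommGroup G]
    [Fintype ℳ] [Fintype 𝒳]
    (μ : Ω → ℝ) (hμ : IsPmf μ)
    (Kt : Ω → G) (M : Ω → ℳ) (Xb : Ω → 𝒳) (g : 𝒳 → G)
    (hind : Indep μ Xb (fun ω => (Kt ω, M ω))) :
    condMutInfo μ (fun ω => Kt ω + g (Xb ω)) Xb M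
      ≤ Real.log (Fintype.card G) - condEnt μ Kt M := by
  classical
  have h1 : ent μ (fun ω => (Kt ω + g (Xb ω), Xb ω, M ω))
      = ent μ (fun ω => (Kt ω, Xb ω, M ω)) := by
    let e : G × 𝒳 × ℳ ≃ G × 𝒳 × ℳ :=
      { toFun := fun p => (p.1 + g p.2.1, p.2.1, p.2.2)
        invFun := fun p => (p.1 - g p.2.1, p.2.1, p.2.2)
        left_inv := fun p => by simp
        right_inv := fun p => by simp }
    have he : (fun ω => (Kt ω + g (Xb ω), Xb ω, M ω))
        = fun ω => e (Kt ω, Xb ω, M ω) := rfl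
    rw [he, ent_equiv]
  have h2 : ent μ (fun ω => (Kt ω, Xb ω, M ω))
      = ent μ Xb + ent μ (fun ω => (Kt ω, M ω)) := by
    let e : G × 𝒳 × ℳ ≃ 𝒳 × (G × ℳ) :=
      { toFun := fun p => (p.2.1, (p.1, p.2.2))
        invFun := fun p => (p.2.1, p.1, p.2.2)
        left_inv := fun p => rfl
        right_inv := fun p => rfl }
    have he : (fun ω => (Xb ω, (Kt ω, M ω)))
        = fun ω => e (Kt ω, Xb ω, M ω) := rfl
    rw [← ent_equiv μ (fun ω => (Kt ω, Xb ω, M ω)) e, ← he,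
      ent_indep μ hμ Xb (fun ω => (Kt ω, M ω)) hind]
  have h3 : ent μ (fun ω => (Kt ω + g (Xb ω), M ω))
      ≤ ent μ (fun ω => Kt ω + g (Xb ω)) + ent μ M :=
    ent_pair_le μ hμ _ M
  have h4 : ent μ (fun ω => Kt ω + g (Xb ω)) ≤ Real.log (Fintype.card G) :=
    ent_le_log μ hμ _
  have h5 : ent μ (fun ω => (Xb ω, M ω)) ≤ ent μ Xb + ent μ M :=
    ent_pair_le μ hμ Xb M
  unfold condMutInfo condEnt
  linarith
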